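/- Let λ ∈ (1/2+ℤ)^n be a dominant so(2n)-weight and T(R) ∈ D_st^λ. For each k ∈ [n−1] let f_k : D_st^λ → D_st^λ be given by f_k(T(R)) = T(R+δ^{(k1)}) if r_{k1} ≠ −r'_{k2} and r_{k1} ≠ −r'_{k+1,2} (for k = 1 the first condition is vacuous), and f_k(T(R)) = T(R−δ^{(k1)}) otherwise. For a subset A = {a_1,…,a_s} ⊆ [n−1] set f_A(T(R)) = f_{a_1}(f_{a_2}(⋯ f_{a_s}(T(R)) ⋯)) (and f_∅(T(R)) = T(R)). Then f_A(T(R)) ∈ D_st^λ for every A ⊆ [n−1], and for subsets A, B ⊆ [n−1] one has f_A(T(R)) = f_B(T(R)) if and only if A = B. -/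

import Mathlib

open scoped BigOperators Classical

noncomputable section

namespace GTpaper

/-- `a - b ∈ ℤ≥0`, the integer-shift order `a ≥ b` on `ℂ`. -/
def IntGE (a b : ℂ) : Prop := ∃ m : ℕ, a = b + m

/-- `a - b ∈ ℤ>0`, the strict integer-shift order `a > b` on `ℂ`. -/
def IntGT (a b : ℂ) : Prop := ∃ m : ℕ, a = b + m + 1

/-- `a ∈ ℤ` as a subset of `ℂ`. -/
def IsInt (a : ℂ) : Prop := ∃ m : ℤ, a = m

/-- `a ∈ 1/2 + ℤ` as a subset of `ℂ`. -/
def IsHalfInt (a : ℂ) : Prop := ∃ m : ℤ, a = (m : ℂ) + 1 / 2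

/-- A tableau: a doubly indexed family of unprimed entries `u k i` (`ℓ_{ki}`) and primed
entries `p k i` (`ℓ'_{ki}`).  Only positions with `1 ≤ i ≤ k ≤ n` (resp. `2 ≤ i` for the primed
entries of type-`D` tableaux) are relevant; normalization predicates below set the rest to `0`. -/
structure Tab (R : Type*) where
  u : ℕ → ℕ → R
  p : ℕ → ℕ → R

instance : Add (Tab ℤ) :=
  ⟨fun a b => ⟨fun k i => a.u k i + b.u k i, fun k i => a.p k i + b.p k i⟩⟩

instance : Neg (Tab ℤ) := ⟨fun a => ⟨fun k i => -a.u k i, fun k i => -a.p k i⟩⟩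

/-- Add an integer tableau `Z` to a tableau `L`. -/
def Tab.addZ {R : Type*} [Ring R] (L : Tab R) (Z : Tab ℤ) : Tab R :=
  ⟨fun k i => L.u k i + (Z.u k i : R), fun k i => L.p k i + (Z.p k i : R)⟩

/-- `δ^{(k i)}`: the integer tableau with a single `1` at unprimed position `(k,i)`. -/
def deltaU (k i : ℕ) : Tab ℤ :=
  ⟨fun a b => if a = k ∧ b = i then 1 else 0, fun _ _ => 0⟩

/-- `δ^{(k i)'}`: the integer tableau with a single `1` at primed position `(k,i)`. -/
def deltaP (k i : ℕ) : Tab ℤ :=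
  ⟨fun _ _ => 0, fun a b => if a = k ∧ b = i then 1 else 0⟩

section Coeffs

variable {F : Type*} [Field F]

/-- `ω_k(L)`, the `k`-th component of the `C`-weight of a type-`C` tableau. -/
def wt (k : ℕ) (L : Tab F) : F :=
  2 * (∑ i ∈ Finset.Icc 1 k, L.p k i) - (∑ i ∈ Finset.Icc 1 k, L.u k i) -
    (∑ i ∈ Finset.Icc 1 (k - 1), L.u (k - 1) i) + (k : F) - 1 / 2

/-- `A_{ki}(L)`. -/
def coA (k i : ℕ) (L : Tab F) : F :=
  ∏ a ∈ (Finset.Icc 1 k).erase i, (L.p k a - L.p k i)⁻¹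

/-- `B_{ki}(L)`. -/
def coB (k i : ℕ) (L : Tab F) : F :=
  2 * coA k i L * (2 * L.p k i - 1) * (∏ a ∈ Finset.Icc 1 k, (L.u k a - L.p k i)) *
    ∏ a ∈ Finset.Icc 1 (k - 1), (L.u (k - 1) a - L.p k i)

/-- `C_{ki}(L)`. -/
def coC (k i : ℕ) (L : Tab F) : F :=
  (2 * L.u (k - 1) i - 1)⁻¹ *
    ∏ a ∈ (Finset.Icc 1 (k - 1)).erase i,
      ((L.u (k - 1) i - L.u (k - 1) a) * (L.u (k - 1) i + L.u (k - 1) a - 1))⁻¹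

/-- `D_{kijm}(L)`. -/
def coD (k i j m : ℕ) (L : Tab F) : F :=
  coA k i L * coA (k - 1) m L * coC k j L *
    (∏ a ∈ (Finset.Icc 1 k).erase i, (L.u (k - 1) j ^ 2 - L.p k a ^ 2)) *
    ∏ a ∈ (Finset.Icc 1 (k - 1)).erase m, (L.u (k - 1) j ^ 2 - L.p (k - 1) a ^ 2)

end Coeffs

/-- The `C`-weight `ω(T(L)) ∈ ℂ^n` of a type-`C` tableau. -/
def cwtv (n : ℕ) (T : Tab ℂ) : Fin n → ℂ := fun k => wt ((k : ℕ) + 1) T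

/-- A type-`C` tableau is `C`-standard (conditions (7) and (8)). -/
def IsCStandard (n : ℕ) (T : Tab ℂ) : Prop :=
  ∀ k, 1 ≤ k → k ≤ n →
    (IntGE (-(1 / 2)) (T.p k 1) ∧
      (∀ i, 1 ≤ i → i ≤ k → IntGE (T.p k i) (T.u k i)) ∧
      (∀ i, 1 ≤ i → i + 1 ≤ k → IntGT (T.u k i) (T.p k (i + 1))) ∧
      (2 ≤ k →
        (∀ i, 1 ≤ i → i ≤ k - 1 → IntGE (T.p k i) (T.u (k - 1) i)) ∧
        (∀ i, 1 ≤ i → i ≤ k - 1 → IntGT (T.u (k - 1) i) (T.p k (i + 1)))))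

/-- A type-`D` tableau is `D`-standard (conditions (5) and (6)); primed entries `p k 1`
are irrelevant. -/
def IsDStandard (n : ℕ) (T : Tab ℂ) : Prop :=
  ∀ k, 2 ≤ k → k ≤ n →
    (IntGE (-T.p k 2) (T.u k 1) ∧
      (∀ i, 2 ≤ i → i ≤ k → IntGE (T.p k i) (T.u k i)) ∧
      (∀ i, 1 ≤ i → i + 1 ≤ k → IntGT (T.u k i) (T.p k (i + 1))) ∧
      IntGE (-T.p k 2) (T.u (k - 1) 1) ∧
      (∀ i, 2 ≤ i → i ≤ k - 1 → IntGE (T.p k i) (T.u (k - 1) i)) ∧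
      (∀ i, 1 ≤ i → i ≤ k - 1 → IntGT (T.u (k - 1) i) (T.p k (i + 1))))

/-- `C`-regularity of a type-`C` tableau. -/
def IsCRegular (n : ℕ) (T : Tab ℂ) : Prop :=
  (∀ k i a, 1 ≤ i → i ≤ k → 1 ≤ a → a ≤ k → k ≤ n → i ≠ a → T.p k a ≠ T.p k i) ∧
  (∀ k i a, 1 ≤ i → i ≤ k → 1 ≤ a → a ≤ k → k ≤ n - 1 → i ≠ a → T.u k a ≠ T.u k i) ∧
  (∀ k i a, 1 ≤ i → i ≤ k → 1 ≤ a → a ≤ k → k ≤ n - 1 → i ≠ a → T.u k a + T.u k i ≠ 1) ∧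
  (∀ k i, 1 ≤ i → i ≤ k → k ≤ n - 1 → T.u k i ≠ 1 / 2)

/-- `C`-genericity of a type-`C` tableau. -/
def IsCGeneric (n : ℕ) (T : Tab ℂ) : Prop :=
  (∀ k i a, 1 ≤ i → i ≤ k → 1 ≤ a → a ≤ k → k ≤ n → i ≠ a → ¬IsInt (T.p k a - T.p k i)) ∧
  (∀ k i a, 1 ≤ i → i ≤ k → 1 ≤ a → a ≤ k → k ≤ n - 1 → i ≠ a → ¬IsInt (T.u k a - T.u k i)) ∧
  (∀ k i a, 1 ≤ i → i ≤ k → 1 ≤ a → a ≤ k → k ≤ n - 1 → ¬IsInt (T.u k a + T.u k i)) ∧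
  (∀ k i, 1 ≤ i → i ≤ k → k ≤ n - 1 → ¬IsHalfInt (T.u k i))

/-- Normalization of a type-`C` tableau: all entries outside `1 ≤ i ≤ k ≤ n` vanish. -/
def CNorm (n : ℕ) (T : Tab ℂ) : Prop :=
  (∀ k i, ¬(1 ≤ i ∧ i ≤ k ∧ k ≤ n) → T.u k i = 0) ∧
  (∀ k i, ¬(1 ≤ i ∧ i ≤ k ∧ k ≤ n) → T.p k i = 0)

/-- Normalization of a type-`D` tableau: unprimed entries outside `1 ≤ i ≤ k ≤ n` and primed
entries outside `2 ≤ i ≤ k ≤ n` vanish. -/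
def DNorm (n : ℕ) (T : Tab ℂ) : Prop :=
  (∀ k i, ¬(1 ≤ i ∧ i ≤ k ∧ k ≤ n) → T.u k i = 0) ∧
  (∀ k i, ¬(2 ≤ i ∧ i ≤ k ∧ k ≤ n) → T.p k i = 0)

/-- A dominant `so(2n)`-weight. -/
def SODominant {n : ℕ} (lam : Fin n → ℂ) : Prop :=
  (∀ i j : Fin n, (i : ℕ) + 1 = (j : ℕ) → IntGE (lam i) (lam j)) ∧
  (∀ i j : Fin n, (i : ℕ) = 0 → (j : ℕ) = 1 → IntGE (-(lam i + lam j)) 0)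

/-- `D_st^λ`: the set of (normalized) `D`-standard tableaux with top row
`ℓ_i = λ_i - i + 3/2` (`1`-based `i`). -/
def DSt (n : ℕ) (lam : Fin n → ℂ) : Set (Tab ℂ) :=
  {T | DNorm n T ∧ IsDStandard n T ∧
    ∀ i : Fin n, T.u n ((i : ℕ) + 1) = lam i - ((i : ℕ) + 1) + 3 / 2}

/-- The type-`D` tableau obtained from a type-`C` tableau by deleting the entries
`ℓ'_{11}, …, ℓ'_{n1}`. -/
def CtoD (W : Tab ℂ) : Tab ℂ := ⟨W.u, fun k i => if i = 1 then 0 else W.p k i⟩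

/-- `𝔅(μ,λ)`: type-`C` tableaux whose left-most primed column is in `μ + ℤ^n` and whose
remaining part is a `D`-standard tableau with top row `λ + ρ_D + 1/2`. -/
def TabB (n : ℕ) (mu lam : Fin n → ℂ) : Set (Tab ℂ) :=
  {W | CNorm n W ∧ (∀ k : Fin n, IsInt (W.p ((k : ℕ) + 1) 1 - mu k)) ∧ CtoD W ∈ DSt n lam}

/-- Membership of a vector of `ℂ^n` in the root lattice `Q_C = {a ∈ ℤ^n | ∑ a_i ∈ 2ℤ}`. -/
def QCvec {n : ℕ} (v : Fin n → ℂ) : Prop :=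
  ∃ q : Fin n → ℤ, (2 ∣ ∑ i, q i) ∧ ∀ i, v i = (q i : ℂ)

/-! ### The symplectic Lie algebra `sp(2n, ℂ)` -/

attribute [local instance 100] LieRing.ofAssociativeRing

/-- Index set `{1,…,n} × {±}` for rows/columns of `2n × 2n` matrices: `(k, true)` is the
positive index `k`, `(k, false)` is the negative index `-k`. -/
abbrev SpIdx (n : ℕ) := Fin n × Bool

/-- The sign of an index. -/
def sgnC {n : ℕ} (a : SpIdx n) : ℂ := if a.2 then 1 else -1

/-- `a ↦ -a` on indices. -/
def negIdx {n : ℕ} (a : SpIdx n) : SpIdx n := (a.1, !a.2)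

/-- `F_{ab} = E_{ab} - sgn(a)sgn(b) E_{-b,-a}`. -/
def Fmat (n : ℕ) (a b : SpIdx n) : Matrix (SpIdx n) (SpIdx n) ℂ :=
  Matrix.single a b 1 - Matrix.single (negIdx b) (negIdx a) (sgnC a * sgnC b)

/-- `sp(2n, ℂ)`: the Lie subalgebra of `gl(2n, ℂ)` spanned by the `F_{ab}`. -/
def sp (n : ℕ) : LieSubalgebra ℂ (Matrix (SpIdx n) (SpIdx n) ℂ) :=
  LieSubalgebra.lieSpan ℂ _ (Set.range fun x : SpIdx n × SpIdx n => Fmat n x.1 x.2)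

/-- `F_{ab}` as an element of `sp(2n, ℂ)`. -/
def spF (n : ℕ) (a b : SpIdx n) : sp n :=
  ⟨Fmat n a b, LieSubalgebra.subset_lieSpan ⟨(a, b), rfl⟩⟩

/-- The basis vector of the free module on a set `S` of tableaux attached to `L`, with the
convention that `T(L) = 0` whenever `L ∉ S`. -/
def bvec {F : Type*} [Field F] (S : Set (Tab F)) (L : Tab F) : ↥S →₀ F :=
  if h : L ∈ S then Finsupp.single ⟨L, h⟩ 1 else 0

/-- The statement that a Lie algebra homomorphism `ρ : sp(2n,ℂ) → End(V)` acts on the basis `S`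
of tableaux by the Gelfand--Tsetlin formulas (with 1-based row index `k+1` for `k : Fin n`). -/
def GTact (n : ℕ) {F : Type*} [Field F] [Algebra ℂ F] (S : Set (Tab F))
    (ρ : sp n →ₗ⁅ℂ⁆ Module.End ℂ (↥S →₀ F)) : Prop :=
  ∀ L ∈ S,
    (∀ k : Fin n,
      ρ (spF n (k, true) (k, true)) (bvec S L) = wt ((k : ℕ) + 1) L • bvec S L ∧
      ρ (spF n (k, true) (k, false)) (bvec S L) =
        ∑ i ∈ Finset.Icc 1 ((k : ℕ) + 1),
          coA ((k : ℕ) + 1) i L • bvec S (L.addZ (deltaP ((k : ℕ) + 1) i)) ∧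
      ρ (spF n (k, false) (k, true)) (bvec S L) =
        ∑ i ∈ Finset.Icc 1 ((k : ℕ) + 1),
          coB ((k : ℕ) + 1) i L • bvec S (L.addZ (-deltaP ((k : ℕ) + 1) i))) ∧
    (∀ k : Fin n, 1 ≤ (k : ℕ) →
      ρ (spF n (⟨(k : ℕ) - 1, lt_of_le_of_lt (Nat.sub_le _ _) k.isLt⟩, true) (k, false))
          (bvec S L) =
        (∑ i ∈ Finset.Icc 1 (k : ℕ),
          coC ((k : ℕ) + 1) i L • bvec S (L.addZ (-deltaU (k : ℕ) i))) +
        ∑ i ∈ Finset.Icc 1 ((k : ℕ) + 1), ∑ j ∈ Finset.Icc 1 (k : ℕ), ∑ m ∈ Finset.Icc 1 (k : ℕ),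
          coD ((k : ℕ) + 1) i j m L •
            bvec S (L.addZ (deltaP ((k : ℕ) + 1) i + deltaU (k : ℕ) j + deltaP (k : ℕ) m)))

/-- The set of tableaux `{T(L + Z)}` with `Z` an integer tableau vanishing on the unprimed
top row. -/
def orbitB {F : Type*} [Field F] (n : ℕ) (L : Tab F) : Set (Tab F) :=
  {M | ∃ Z : Tab ℤ, (∀ i, Z.u n i = 0) ∧ M = L.addZ Z}

/-- The tableau `T(W^{μ,λ})`. -/
def Wup (n : ℕ) (mu lam : Fin n → ℂ) : Tab ℂ :=
  ⟨fun k i => if h : 1 ≤ i ∧ i ≤ k ∧ k ≤ n then lam ⟨i - 1, by omega⟩ - (i : ℂ) + 3 / 2 else 0,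
   fun k i => if h : 1 ≤ i ∧ i ≤ k ∧ k ≤ n then
      (if i = 1 then mu ⟨k - 1, by omega⟩ else lam ⟨i - 1, by omega⟩ - (i : ℂ) + 3 / 2) else 0⟩

/-- The tableau `T(W_{μ,λ})`. -/
def Wlow (n : ℕ) (mu lam : Fin n → ℂ) : Tab ℂ :=
  ⟨fun k i => if h : 1 ≤ i ∧ i ≤ k ∧ k ≤ n then
      (if i = 1 then
        (if (n - k) % 2 = 0 then lam ⟨0, by omega⟩ + 1 / 2 else 1 - (lam ⟨0, by omega⟩ + 1 / 2))
       else lam ⟨i - 1, by omega⟩ - (i : ℂ) + 3 / 2) else 0,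
   fun k i => if h : 1 ≤ i ∧ i ≤ k ∧ k ≤ n then
      (if i = 1 then mu ⟨k - 1, by omega⟩ else lam ⟨i - 1, by omega⟩ - (i : ℂ) + 3 / 2) else 0⟩

/-- `𝔅_k^+(μ,λ)` for a `1`-based row index `k`. -/
def BkPlus (n : ℕ) (mu lam : Fin n → ℂ) (k : ℕ) : Set (Tab ℂ) :=
  {W | W ∈ TabB n mu lam ∧ IntGE (W.p k 1) (1 / 2)}

end GTpaper

namespace GTpaper

/-- The map `f_k` on type-`D` tableaux. -/
def fkD (k : ℕ) (R : Tab ℂ) : Tab ℂ :=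
  if (k = 1 ∨ R.u k 1 ≠ -R.p k 2) ∧ R.u k 1 ≠ -R.p (k + 1) 2
  then R.addZ (deltaU k 1) else R.addZ (-deltaU k 1)

/-- `f_A = f_{a_1} ∘ f_{a_2} ∘ ⋯ ∘ f_{a_s}` for a subset `A = {a_1 < a_2 < ⋯ < a_s}`. -/
def fAD (A : Finset ℕ) (R : Tab ℂ) : Tab ℂ := (A.sort (· ≤ ·)).foldr fkD R

/-- The sign `ε_k` of the shift performed by `f_k` on `R`. -/
def epsC (R : Tab ℂ) (k : ℕ) : ℂ :=
  if (k = 1 ∨ R.u k 1 ≠ -R.p k 2) ∧ R.u k 1 ≠ -R.p (k + 1) 2 then 1 else -1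

lemma negdeltaU_u (k i a b : ℕ) : (-deltaU k i).u a b = if a = k ∧ b = i then -1 else 0 := by
  show -(if a = k ∧ b = i then (1:ℤ) else 0) = _
  split_ifs <;> norm_num

lemma negdeltaU_p (k i a b : ℕ) : (-deltaU k i).p a b = 0 := by
  show -(0:ℤ) = 0; norm_num

lemma epsC_ne_zero (R : Tab ℂ) (k : ℕ) : epsC R k ≠ 0 := by
  unfold epsC; split_ifs <;> norm_num

lemma intGE_succ {a b : ℂ} (h : IntGE a b) (hne : b ≠ a) : IntGE a (b + 1) := by
  obtain ⟨m, hm⟩ := h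
  match m with
  | 0 => exact absurd (by simpa using hm.symm) hne
  | Nat.succ m' => exact ⟨m', by push_cast at hm ⊢; linear_combination hm⟩

lemma intGT_succ {a b : ℂ} (h : IntGT a b) : IntGT (a + 1) b := by
  obtain ⟨m, hm⟩ := h; exact ⟨m + 1, by push_cast at hm ⊢; linear_combination hm⟩

lemma uInt_of_mem {n : ℕ} (hn : 2 ≤ n) {lam : Fin n → ℂ} (hlam : ∀ i, IsHalfInt (lam i))
    {R : Tab ℂ} (hR : R ∈ DSt n lam) : ∀ k, 1 ≤ k → k ≤ n → IsInt (R.u k 1) := by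
  have hbase : IsInt (R.u n 1) := by
    have h0 := hR.2.2 ⟨0, by omega⟩
    obtain ⟨m, hm⟩ := hlam ⟨0, by omega⟩
    have h0' : R.u n 1 = lam ⟨0, by omega⟩ - 1 + 3 / 2 := by simpa using h0
    exact ⟨m + 1, by rw [h0', hm]; push_cast; ring⟩
  have key : ∀ d, d ≤ n - 1 → IsInt (R.u (n - d) 1) := by
    intro d
    induction d with
    | zero => intro _; simpa using hbase
    | succ d ih =>
      intro hd
      have h2 : 2 ≤ n - d := by omega
      obtain ⟨c1, -, -, -, -, c6⟩ := hR.2.1 (n - d) h2 (by omega)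
      obtain ⟨z, hz⟩ := ih (by omega)
      obtain ⟨m, hm⟩ := c1
      have hb0 := c6 1 le_rfl (by omega)
      have hb' : IntGT (R.u (n - d - 1) 1) (R.p (n - d) 2) := by simpa using hb0
      obtain ⟨b, hb⟩ := hb'
      refine ⟨-z - m + b + 1, ?_⟩
      have hnd : n - (d + 1) = n - d - 1 := by omega
      rw [hnd]
      push_cast
      linear_combination hb - hm - hz
  intro k hk1 hk2
  have hkk : k = n - (n - k) := by omega
  rw [hkk]; exact key (n - k) (by omega)

lemma DSt_shift {n : ℕ} (hn : 2 ≤ n) {lam : Fin n → ℂ} {R : Tab ℂ} (hR : R ∈ DSt n lam)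
    {k : ℕ} (hk1 : 1 ≤ k) (hk2 : k ≤ n - 1) (ε : ℂ)
    (A1 : 2 ≤ k → IntGE (-R.p k 2) (R.u k 1 + ε))
    (A2 : 2 ≤ k → IntGT (R.u k 1 + ε) (R.p k 2))
    (A3 : IntGE (-R.p (k + 1) 2) (R.u k 1 + ε))
    (A4 : IntGT (R.u k 1 + ε) (R.p (k + 1) 2))
    {R' : Tab ℂ} (hp : ∀ a b, R'.p a b = R.p a b)
    (hu : ∀ a b, R'.u a b = if a = k ∧ b = 1 then R.u k 1 + ε else R.u a b) :
    R' ∈ DSt n lam := by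
  obtain ⟨⟨hN1, hN2⟩, hstd, htop⟩ := hR
  refine ⟨⟨?_, ?_⟩, ?_, ?_⟩
  · intro a b hab
    rw [hu, if_neg, hN1 a b hab]
    rintro ⟨rfl, rfl⟩
    exact hab ⟨le_rfl, hk1, by omega⟩
  · intro a b hab; rw [hp]; exact hN2 a b hab
  · intro k' h2 hkn
    obtain ⟨c1, c2, c3, c4, c5, c6⟩ := hstd k' h2 hkn
    refine ⟨?_, ?_, ?_, ?_, ?_, ?_⟩
    · simp only [hp, hu]
      split_ifs with h
      · obtain ⟨rfl, -⟩ := h; exact A1 h2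
      · exact c1
    · intro i hi1 hi2
      simp only [hp, hu]
      rw [if_neg (by rintro ⟨-, rfl⟩; omega)]
      exact c2 i hi1 hi2
    · intro i hi1 hi2
      simp only [hp, hu]
      split_ifs with h
      · obtain ⟨rfl, rfl⟩ := h
        simpa using A2 (by omega)
      · exact c3 i hi1 hi2
    · simp only [hp, hu]
      split_ifs with h
      · obtain ⟨h1, -⟩ := h
        have hke : k' = k + 1 := by omega
        subst hke
        simpa using A3
      · exact c4
    · intro i hi1 hi2
      simp only [hp, hu]
      rw [if_neg (by rintro ⟨-, rfl⟩; omega)]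
      exact c5 i hi1 hi2
    · intro i hi1 hi2
      simp only [hp, hu]
      split_ifs with h
      · obtain ⟨h1, rfl⟩ := h
        have hke : k' = k + 1 := by omega
        subst hke
        simpa using A4
      · exact c6 i hi1 hi2
  · intro i
    rw [hu, if_neg, htop i]
    rintro ⟨rfl, -⟩
    omega

lemma fkD_spec {n : ℕ} (hn : 2 ≤ n) {lam : Fin n → ℂ} (hlam : ∀ i, IsHalfInt (lam i))
    {R : Tab ℂ} (hR : R ∈ DSt n lam) {k : ℕ} (hk1 : 1 ≤ k) (hk2 : k ≤ n - 1) :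
    fkD k R ∈ DSt n lam ∧ (∀ a b, (fkD k R).p a b = R.p a b) ∧
      ∀ a b, (fkD k R).u a b = if a = k ∧ b = 1 then R.u k 1 + epsC R k else R.u a b := by
  have hkn : k ≤ n := by omega
  have hk1n : k + 1 ≤ n := by omega
  by_cases hc : (k = 1 ∨ R.u k 1 ≠ -R.p k 2) ∧ R.u k 1 ≠ -R.p (k + 1) 2
  · have heps : epsC R k = 1 := by unfold epsC; exact if_pos hc
    have hfk : fkD k R = R.addZ (deltaU k 1) := by unfold fkD; exact if_pos hc
    have hp : ∀ a b, (fkD k R).p a b = R.p a b := by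
      intro a b; rw [hfk]; simp [Tab.addZ, deltaU]
    have hu : ∀ a b, (fkD k R).u a b = if a = k ∧ b = 1 then R.u k 1 + epsC R k else R.u a b := by
      intro a b; rw [hfk, heps]
      by_cases h : a = k ∧ b = 1
      · obtain ⟨rfl, rfl⟩ := h; simp [Tab.addZ, deltaU]
      · simp [Tab.addZ, deltaU, h]
    refine ⟨DSt_shift hn hR hk1 hk2 (epsC R k) ?_ ?_ ?_ ?_ hp hu, hp, hu⟩ <;> rw [heps]
    · intro h2
      exact intGE_succ (hR.2.1 k h2 hkn).1 (hc.1.resolve_left (by omega))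
    · intro h2
      have c3' : IntGT (R.u k 1) (R.p k 2) := by
        simpa using (hR.2.1 k h2 hkn).2.2.1 1 le_rfl (by omega)
      exact intGT_succ c3'
    · have c4' : IntGE (-R.p (k + 1) 2) (R.u k 1) := by
        simpa using (hR.2.1 (k + 1) (by omega) hk1n).2.2.2.1
      exact intGE_succ c4' hc.2
    · have c6' : IntGT (R.u k 1) (R.p (k + 1) 2) := by
        simpa using (hR.2.1 (k + 1) (by omega) hk1n).2.2.2.2.2 1 le_rfl (by omega)
      exact intGT_succ c6'
  · have heps : epsC R k = -1 := by unfold epsC; exact if_neg hc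
    have hfk : fkD k R = R.addZ (-deltaU k 1) := by unfold fkD; exact if_neg hc
    have hp : ∀ a b, (fkD k R).p a b = R.p a b := by
      intro a b; rw [hfk]; simp [Tab.addZ, negdeltaU_p]
    have hu : ∀ a b, (fkD k R).u a b = if a = k ∧ b = 1 then R.u k 1 + epsC R k else R.u a b := by
      intro a b; rw [hfk, heps]
      by_cases h : a = k ∧ b = 1
      · obtain ⟨rfl, rfl⟩ := h; simp [Tab.addZ, negdeltaU_u]
      · simp [Tab.addZ, negdeltaU_u, h]
    obtain ⟨z, hz⟩ := uInt_of_mem hn hlam hR k hk1 hkn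
    have hstk1 := hR.2.1 (k + 1) (by omega) hk1n
    have c4' : IntGE (-R.p (k + 1) 2) (R.u k 1) := by simpa using hstk1.2.2.2.1
    obtain ⟨m', hm'⟩ := c4'
    push_neg at hc
    have hz1 : 1 ≤ z := by
      by_cases hq : R.u k 1 = -R.p (k + 1) 2
      · have c6' : IntGT (R.u k 1) (R.p (k + 1) 2) := by
          simpa using hstk1.2.2.2.2.2 1 le_rfl (by omega)
        obtain ⟨b, hb⟩ := c6'
        have hcast : (b : ℤ) + 1 = 2 * z := by
          have : (b : ℂ) + 1 = 2 * (z : ℂ) := by linear_combination -hb - hq + 2 * hz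
          exact_mod_cast this
        omega
      · have hP := mt hc hq
        rw [not_or, not_ne_iff] at hP
        have h2k : 2 ≤ k := by omega
        have c3' : IntGT (R.u k 1) (R.p k 2) := by
          simpa using (hR.2.1 k h2k hkn).2.2.1 1 le_rfl (by omega)
        obtain ⟨a, ha⟩ := c3'
        have hcast : (a : ℤ) + 1 = 2 * z := by
          have : (a : ℂ) + 1 = 2 * (z : ℂ) := by linear_combination -ha - hP.2 + 2 * hz
          exact_mod_cast this
        omega
    have ht : (((2 * z - 2).toNat : ℕ) : ℂ) = 2 * (z : ℂ) - 2 := by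
      have h' : ((2 * z - 2).toNat : ℤ) = 2 * z - 2 := Int.toNat_of_nonneg (by omega)
      exact_mod_cast h'
    refine ⟨DSt_shift hn hR hk1 hk2 (epsC R k) ?_ ?_ ?_ ?_ hp hu, hp, hu⟩ <;> rw [heps]
    · intro h2
      obtain ⟨m, hm⟩ := (hR.2.1 k h2 hkn).1
      exact ⟨m + 1, by push_cast; linear_combination hm⟩
    · intro h2
      obtain ⟨m, hm⟩ := (hR.2.1 k h2 hkn).1
      refine ⟨(2 * z - 2).toNat + m, ?_⟩
      push_cast
      rw [ht]
      linear_combination hm + 2 * hz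
    · exact ⟨m' + 1, by push_cast; linear_combination hm'⟩
    · refine ⟨(2 * z - 2).toNat + m', ?_⟩
      push_cast
      rw [ht]
      linear_combination hm' + 2 * hz

lemma fold_spec {n : ℕ} (hn : 2 ≤ n) {lam : Fin n → ℂ} (hlam : ∀ i, IsHalfInt (lam i))
    {R : Tab ℂ} (hR : R ∈ DSt n lam) :
    ∀ l : List ℕ, l.Nodup → (∀ k ∈ l, 1 ≤ k ∧ k ≤ n - 1) →
      (l.foldr fkD R ∈ DSt n lam) ∧ (∀ a b, (l.foldr fkD R).p a b = R.p a b) ∧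
        ∀ a b, (l.foldr fkD R).u a b =
          if a ∈ l ∧ b = 1 then R.u a b + epsC R a else R.u a b := by
  intro l
  induction l with
  | nil => intro _ _; exact ⟨hR, fun a b => rfl, fun a b => by simp⟩
  | cons k l ih =>
    intro hnd hbd
    obtain ⟨hk, hl⟩ := List.nodup_cons.mp hnd
    obtain ⟨hS, hP, hU⟩ := ih hl (fun x hx => hbd x (List.mem_cons_of_mem _ hx))
    obtain ⟨hk1, hk2⟩ := hbd k (List.mem_cons_self)
    obtain ⟨hS2, hP2, hU2⟩ := fkD_spec hn hlam hS hk1 hk2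
    have hRk : (l.foldr fkD R).u k 1 = R.u k 1 := by
      rw [hU k 1, if_neg (fun h => hk h.1)]
    have hepseq : epsC (l.foldr fkD R) k = epsC R k := by
      unfold epsC; rw [hRk, hP k 2, hP (k + 1) 2]
    simp only [List.foldr_cons]
    refine ⟨hS2, fun a b => by rw [hP2 a b, hP a b], fun a b => ?_⟩
    rw [hU2 a b]
    by_cases h : a = k ∧ b = 1
    · obtain ⟨rfl, rfl⟩ := h
      rw [if_pos ⟨rfl, rfl⟩, if_pos ⟨List.mem_cons_self, rfl⟩, hRk, hepseq]
    · rw [if_neg h, hU a b]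
      have hiff : (a ∈ k :: l ∧ b = 1) ↔ (a ∈ l ∧ b = 1) := by
        constructor
        · rintro ⟨hm, rfl⟩
          exact ⟨(List.mem_cons.mp hm).resolve_left fun e => h ⟨e, rfl⟩, rfl⟩
        · rintro ⟨hm, rfl⟩; exact ⟨List.mem_cons_of_mem _ hm, rfl⟩
      by_cases h2 : a ∈ l ∧ b = 1
      · rw [if_pos h2, if_pos (hiff.mpr h2)]
      · rw [if_neg h2, if_neg (fun hh => h2 (hiff.mp hh))]


/-- `f_A(T(R)) ∈ D_st^λ` for every `A ⊆ [n-1]`, and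
`f_A(T(R)) = f_B(T(R))` iff `A = B`. -/
theorem fA_standard_and_injective (n : ℕ) (hn : 2 ≤ n) (lam : Fin n → ℂ)
    (hlam : ∀ i, IsHalfInt (lam i)) (hdom : SODominant lam)
    (R : Tab ℂ) (hR : R ∈ DSt n lam) :
    (∀ A : Finset ℕ, A ⊆ Finset.Icc 1 (n - 1) → fAD A R ∈ DSt n lam) ∧
      (∀ A B : Finset ℕ, A ⊆ Finset.Icc 1 (n - 1) → B ⊆ Finset.Icc 1 (n - 1) →
        (fAD A R = fAD B R ↔ A = B)) := by
  have key : ∀ A : Finset ℕ, A ⊆ Finset.Icc 1 (n - 1) →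
      (fAD A R ∈ DSt n lam) ∧ (∀ a b, (fAD A R).p a b = R.p a b) ∧
        ∀ a b, (fAD A R).u a b =
          if a ∈ A.sort (· ≤ ·) ∧ b = 1 then R.u a b + epsC R a else R.u a b := by
    intro A hA
    exact fold_spec hn hlam hR (A.sort (· ≤ ·)) (A.sort_nodup (· ≤ ·))
      (fun k hk => Finset.mem_Icc.mp (hA ((Finset.mem_sort _).mp hk)))
  constructor
  · intro A hA; exact (key A hA).1
  · intro A B hA hB
    refine ⟨fun heq => ?_, fun h => by rw [h]⟩
    ext a
    have h1 := (key A hA).2.2 a 1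
    have h2 := (key B hB).2.2 a 1
    rw [heq] at h1
    rw [h2] at h1
    by_cases haA : a ∈ A <;> by_cases haB : a ∈ B
    · simp [haA, haB]
    · exfalso
      rw [if_neg (fun h => haB ((Finset.mem_sort _).mp h.1)),
        if_pos ⟨(Finset.mem_sort _).mpr haA, rfl⟩] at h1
      exact epsC_ne_zero R a (by linear_combination -h1)
    · exfalso
      rw [if_pos ⟨(Finset.mem_sort _).mpr haB, rfl⟩,
        if_neg (fun h => haA ((Finset.mem_sort _).mp h.1))] at h1
      exact epsC_ne_zero R a (by linear_combination h1)
    · simp [haA, haB]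

end GTpaper
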